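/- If f : [0,∞) → [a,b] (0 < a ≤ b) is continuous, s ↦ s f(s) is strictly increasing, and σ(τ) = f(‖τ‖)τ on M = ℝ^{d×d}_sym, then σ is strictly monotone: (σ(τ) − σ(η)) : (τ − η) > 0 whenever τ ≠ η. -/
import Mathlib

/-- Frobenius inner product of two matrices. -/
def frob {d : ℕ} (A B : Matrix (Fin d) (Fin d) ℝ) : ℝ :=
  ∑ i : Fin d, ∑ j : Fin d, A i j * B i j

/-- Frobenius norm of a matrix. -/
noncomputable def frobNorm {d : ℕ} (A : Matrix (Fin d) (Fin d) ℝ) : ℝ :=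
  Real.sqrt (frob A A)

section aux
variable {d : ℕ} (A B C : Matrix (Fin d) (Fin d) ℝ)

lemma frob_self_nonneg : 0 ≤ frob A A := by
  apply Finset.sum_nonneg; intro i _; apply Finset.sum_nonneg; intro j _; exact mul_self_nonneg _

lemma frobNorm_nonneg : 0 ≤ frobNorm A := Real.sqrt_nonneg _

lemma frobNorm_sq : frobNorm A ^ 2 = frob A A := Real.sq_sqrt (frob_self_nonneg A)

lemma frob_comm : frob A B = frob B A := by
  unfold frob; congr 1; ext i; congr 1; ext j; ring

lemma frob_sub_left : frob (A - B) C = frob A C - frob B C := by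
  unfold frob
  rw [← Finset.sum_sub_distrib]
  congr 1; ext i
  rw [← Finset.sum_sub_distrib]
  congr 1; ext j
  simp [Matrix.sub_apply]; ring

lemma frob_sub_right : frob A (B - C) = frob A B - frob A C := by
  rw [frob_comm, frob_sub_left, frob_comm B A, frob_comm C A]

lemma frob_smul_left (c : ℝ) : frob (c • A) B = c * frob A B := by
  unfold frob
  rw [Finset.mul_sum]
  congr 1; ext i
  rw [Finset.mul_sum]
  congr 1; ext j
  simp [Matrix.smul_apply]; ring

lemma frob_cauchy : frob A B ≤ frobNorm A * frobNorm B := by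
  have h : (frob A B)^2 ≤ frob A A * frob B B := by
    unfold frob
    simpa [← Finset.sum_product', pow_two] using
      Finset.sum_mul_sq_le_sq_mul_sq (Finset.univ ×ˢ Finset.univ)
        (fun p : Fin d × Fin d => A p.1 p.2) (fun p => B p.1 p.2)
  calc frob A B ≤ |frob A B| := le_abs_self _
    _ ≤ frobNorm A * frobNorm B := by
        rw [← Real.sqrt_sq_eq_abs, frobNorm, frobNorm, ← Real.sqrt_mul (frob_self_nonneg A)]
        exact Real.sqrt_le_sqrt h

lemma frob_self_pos (h : A ≠ 0) : 0 < frob A A := by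
  rcases (frob_self_nonneg A).lt_or_eq with hlt | heq
  · exact hlt
  · exfalso; apply h
    ext i j
    have h1 : ∀ i ∈ (Finset.univ : Finset (Fin d)), (0:ℝ) ≤ ∑ j, A i j * A i j :=
      fun i _ => Finset.sum_nonneg fun j _ => mul_self_nonneg _
    have h2 := (Finset.sum_eq_zero_iff_of_nonneg h1).1 heq.symm i (Finset.mem_univ i)
    have h3 := (Finset.sum_eq_zero_iff_of_nonneg
      (fun j _ => mul_self_nonneg (A i j))).1 h2 j (Finset.mem_univ j)
    simpa [mul_self_eq_zero] using h3

end aux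

/-- If `f : [0,∞) → [a,b]` (`0 < a ≤ b`) is continuous and `s ↦ s f(s)` strictly
increasing, then `σ(τ) = f(‖τ‖) τ` is strictly monotone on symmetric matrices. -/
theorem damage_law_strictly_monotone
    {d : ℕ} (a b : ℝ) (ha : 0 < a) (hab : a ≤ b)
    (f : ℝ → ℝ) (hcont : ContinuousOn f (Set.Ici (0 : ℝ)))
    (hrange : ∀ s : ℝ, 0 ≤ s → a ≤ f s ∧ f s ≤ b)
    (hmono : ∀ s t : ℝ, 0 ≤ s → s < t → s * f s < t * f t)
    (σ : Matrix (Fin d) (Fin d) ℝ → Matrix (Fin d) (Fin d) ℝ)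
    (hσ : ∀ τ : Matrix (Fin d) (Fin d) ℝ, σ τ = f (frobNorm τ) • τ) :
    ∀ τ η : Matrix (Fin d) (Fin d) ℝ, τ.IsSymm → η.IsSymm → τ ≠ η →
      0 < frob (σ τ - σ η) (τ - η) := by
  intro τ η _ _ hne
  set s := frobNorm τ with hs
  set t := frobNorm η with ht
  set p := frob τ η with hp
  have hs0 : 0 ≤ s := frobNorm_nonneg τ
  have ht0 : 0 ≤ t := frobNorm_nonneg η
  have hss : frob τ τ = s ^ 2 := (frobNorm_sq τ).symm
  have htt : frob η η = t ^ 2 := (frobNorm_sq η).symm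
  have hpst : p ≤ s * t := frob_cauchy τ η
  have hfs : 0 < f s := lt_of_lt_of_le ha (hrange s hs0).1
  have hft : 0 < f t := lt_of_lt_of_le ha (hrange t ht0).1
  -- key decomposition
  have key : frob (σ τ - σ η) (τ - η)
      = (s * f s - t * f t) * (s - t) + (f s + f t) * (s * t - p) := by
    rw [hσ, hσ, frob_sub_left, frob_smul_left, frob_smul_left,
      frob_sub_right, frob_sub_right, hss, htt, ← hp, frob_comm η τ, ← hp, ← hs, ← ht]
    ring
  -- strict positivity of the difference norm
  have hdiff : 0 < frob (τ - η) (τ - η) :=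
    frob_self_pos _ (sub_ne_zero_of_ne hne)
  have hdiff' : frob (τ - η) (τ - η) = (s - t) ^ 2 + 2 * (s * t - p) := by
    rw [frob_sub_left, frob_sub_right, frob_sub_right, hss, htt, ← hp, frob_comm η τ, ← hp]
    ring
  rw [key]
  -- first term nonneg, strict when s ≠ t
  have h1 : 0 ≤ (s * f s - t * f t) * (s - t) := by
    rcases lt_trichotomy s t with h | h | h
    · have := hmono s t hs0 h
      nlinarith
    · simp [h]
    · have := hmono t s ht0 h
      nlinarith
  have h2 : 0 ≤ s * t - p := by linarith
  by_cases hst : s = t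
  · have hp2 : 0 < s * t - p := by
      rw [hdiff', hst] at hdiff
      nlinarith
    nlinarith
  · have h1' : 0 < (s * f s - t * f t) * (s - t) := by
      rcases lt_or_gt_of_ne hst with h | h
      · have := hmono s t hs0 h
        nlinarith
      · have := hmono t s ht0 h
        nlinarith
    nlinarith
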